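/- arXiv:2304.06791 — 6 statements merged into one kernel-verified Lean document; each statement's English description precedes it below -/
import Mathlib

section
/- Let H ∈ k⟦X⟧ be nonzero. (a) If Φ₁ and Φ₂ both have order 1 and satisfy H∘Φ₁ = Φ₁′·H and H∘Φ₂ = Φ₂′·H, then the composition Φ₁∘Φ₂ has order 1 and satisfies H∘(Φ₁∘Φ₂) = (Φ₁∘Φ₂)′·H. (b) If Φ has order 1, satisfies H∘Φ = Φ′·H, and Ψ ∈ k⟦X⟧ satisfies Φ∘Ψ = X and Ψ∘Φ = X (Ψ is the compositional inverse of Φ), then H∘Ψ = Ψ′·H. Hence the set of order-1 solutions of the Aczél–Jabotinsky equation with generator H is a group under substitution. -/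
open PowerSeries

variable {k : Type*} [Field k] [CharZero k]

/-- Substitution of `g` (with zero constant coefficient) into `f`. -/
noncomputable def comp (f g : PowerSeries k) : PowerSeries k :=
  PowerSeries.mk fun m => ∑ n ∈ Finset.range (m + 1),
    PowerSeries.coeff n f * PowerSeries.coeff m (g ^ n)

set_option linter.unusedSectionVars false
set_option linter.unusedVariables false

theorem coeff_comp (f g : PowerSeries k) (m : ℕ) :
    coeff m (comp f g) = ∑ n ∈ Finset.range (m + 1),
      coeff n f * coeff m (g ^ n) := by
  simp [comp]

theorem coeff_pow_of_cc {g : PowerSeries k} (hg : constantCoeff g = 0)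
    {m n : ℕ} (h : m < n) : coeff m (g ^ n) = 0 := by
  have : (X : PowerSeries k) ^ n ∣ g ^ n :=
    pow_dvd_pow_of_dvd (PowerSeries.X_dvd_iff.mpr hg) n
  exact (PowerSeries.X_pow_dvd_iff.mp this) m h

theorem coeff_aeval {g : PowerSeries k} (hg : constantCoeff g = 0)
    (p : Polynomial k) (m : ℕ) :
    coeff m (Polynomial.aeval g p) = ∑ n ∈ Finset.range (m + 1),
      p.coeff n * coeff m (g ^ n) := by
  set N := max (m + 1) (p.natDegree + 1) with hN
  have hd : p.natDegree < N := lt_of_lt_of_le (Nat.lt_succ_self _) (le_max_right _ _)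
  rw [Polynomial.aeval_eq_sum_range' hd]
  rw [map_sum]
  have : ∀ n ∈ Finset.range N, coeff m (p.coeff n • g ^ n)
      = p.coeff n * coeff m (g ^ n) := by
    intro n _; rw [PowerSeries.coeff_smul, smul_eq_mul]
  rw [Finset.sum_congr rfl this]
  exact (Finset.sum_subset (Finset.range_subset_range.mpr (le_max_left _ _))
    (fun x _ hx => by
      rw [coeff_pow_of_cc hg (by simpa using hx), mul_zero])).symm

theorem coeff_comp_aeval {g : PowerSeries k} (hg : constantCoeff g = 0)
    (f : PowerSeries k) {m N : ℕ} (h : m < N) :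
    coeff m (comp f g) = coeff m (Polynomial.aeval g (trunc N f)) := by
  rw [coeff_comp, coeff_aeval hg]
  refine Finset.sum_congr rfl fun n hn => ?_
  rw [coeff_trunc, if_pos (lt_of_le_of_lt (Nat.lt_succ_iff.mp (Finset.mem_range.mp hn)) h)]

theorem coeff_comp_congr {f₁ f₂ : PowerSeries k} (g : PowerSeries k) {m : ℕ}
    (h : ∀ n ≤ m, coeff n f₁ = coeff n f₂) :
    coeff m (comp f₁ g) = coeff m (comp f₂ g) := by
  rw [coeff_comp, coeff_comp]
  exact Finset.sum_congr rfl fun n hn => by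
    rw [h n (Nat.lt_succ_iff.mp (Finset.mem_range.mp hn))]

theorem coeff_mul_congr {A A' B B' : PowerSeries k} {m : ℕ}
    (hA : ∀ n ≤ m, coeff n A = coeff n A')
    (hB : ∀ n ≤ m, coeff n B = coeff n B') :
    coeff m (A * B) = coeff m (A' * B') := by
  rw [PowerSeries.coeff_mul, PowerSeries.coeff_mul]
  refine Finset.sum_congr rfl fun p hp => ?_
  have hps := Finset.HasAntidiagonal.mem_antidiagonal.mp hp
  rw [hA p.1 (by omega), hB p.2 (by omega)]

theorem constantCoeff_comp (f g : PowerSeries k) :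
    constantCoeff (comp f g) = constantCoeff f := by
  rw [← PowerSeries.coeff_zero_eq_constantCoeff, coeff_comp]
  simp

theorem coeff_one_comp (f g : PowerSeries k) :
    coeff 1 (comp f g) = coeff 1 f * coeff 1 g := by
  rw [coeff_comp]
  rw [show (1:ℕ) + 1 = 2 from rfl, Finset.sum_range_succ, Finset.sum_range_one]
  simp

theorem comp_C (c : k) (g : PowerSeries k) : comp (PowerSeries.C c) g = PowerSeries.C c := by
  ext m
  rw [coeff_comp]
  rcases Nat.eq_zero_or_pos m with rfl | hm
  · simp
  · rw [Finset.sum_eq_single 0]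
    · simp [PowerSeries.coeff_C, Nat.pos_iff_ne_zero.mp hm]
    · intro n _ hn; simp [PowerSeries.coeff_C, hn]
    · simp
theorem comp_one (g : PowerSeries k) : comp 1 g = 1 := by
  simpa using comp_C (1 : k) g

theorem comp_add (a b g : PowerSeries k) :
    comp (a + b) g = comp a g + comp b g := by
  ext m
  simp [coeff_comp, add_mul, Finset.sum_add_distrib]

theorem comp_X_left {g : PowerSeries k} (hg : constantCoeff g = 0) :
    comp X g = g := by
  ext m
  rw [coeff_comp]
  rcases Nat.eq_zero_or_pos m with rfl | hm
  · simpa using hg.symm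
  · rw [Finset.sum_eq_single 1]
    · simp
    · intro n _ hn; simp [PowerSeries.coeff_X, hn]
    · intro h; exact absurd (Finset.mem_range.mpr (by omega)) h

theorem comp_X_right (f : PowerSeries k) : comp f X = f := by
  ext m
  rw [coeff_comp, Finset.sum_eq_single m]
  · simp [PowerSeries.X_pow_eq, PowerSeries.coeff_monomial]
  · intro n _ hn
    rw [PowerSeries.X_pow_eq, PowerSeries.coeff_monomial, if_neg (fun h => hn h.symm), mul_zero]
  · intro h; exact absurd (Finset.mem_range.mpr (Nat.lt_succ_self m)) h

theorem comp_mul {g : PowerSeries k} (hg : constantCoeff g = 0)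
    (a b : PowerSeries k) : comp (a * b) g = comp a g * comp b g := by
  ext m
  have h1 : coeff m (comp a g * comp b g) =
      coeff m ((Polynomial.aeval g (trunc (m+1) a)) * (Polynomial.aeval g (trunc (m+1) b))) :=
    coeff_mul_congr
      (fun n hn => coeff_comp_aeval hg a (Nat.lt_succ_of_le hn))
      (fun n hn => coeff_comp_aeval hg b (Nat.lt_succ_of_le hn))
  rw [h1, ← map_mul, coeff_comp, coeff_aeval hg]
  refine Finset.sum_congr rfl fun n hn => ?_
  have hnm : n < m + 1 := Finset.mem_range.mp hn
  rw [Polynomial.coeff_mul, PowerSeries.coeff_mul]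
  congr 1
  refine Finset.sum_congr rfl fun p hp => ?_
  have hps := Finset.HasAntidiagonal.mem_antidiagonal.mp hp
  rw [coeff_trunc, coeff_trunc, if_pos (by omega), if_pos (by omega)]

theorem comp_aeval {g h : PowerSeries k} (hg : constantCoeff g = 0)
    (hh : constantCoeff h = 0) (P : Polynomial k) :
    comp (Polynomial.aeval g P) h = Polynomial.aeval (comp g h) P := by
  induction P using Polynomial.induction_on with
  | C a => rw [Polynomial.aeval_C, Polynomial.aeval_C]; exact comp_C a h
  | add p q hp hq => rw [map_add, map_add, comp_add, hp, hq]
  | monomial n a ih =>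
      have e1 : (Polynomial.C a * Polynomial.X ^ (n+1)) =
          (Polynomial.C a * Polynomial.X ^ n) * Polynomial.X := by ring
      have e2 : Polynomial.aeval g (Polynomial.C a * Polynomial.X ^ (n+1)) =
          Polynomial.aeval g (Polynomial.C a * Polynomial.X ^ n) * g := by
        rw [e1, map_mul, Polynomial.aeval_X]
      have e3 : Polynomial.aeval (comp g h) (Polynomial.C a * Polynomial.X ^ (n+1)) =
          Polynomial.aeval (comp g h) (Polynomial.C a * Polynomial.X ^ n) * comp g h := by
        rw [e1, map_mul, Polynomial.aeval_X]
      rw [e2, e3, comp_mul hh, ih]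

theorem constantCoeff_comp' {g h : PowerSeries k} (hg : constantCoeff g = 0) :
    constantCoeff (comp g h) = 0 := by rw [constantCoeff_comp, hg]

theorem comp_assoc {g h : PowerSeries k} (hg : constantCoeff g = 0)
    (hh : constantCoeff h = 0) (f : PowerSeries k) :
    comp (comp f g) h = comp f (comp g h) := by
  ext m
  have h1 : coeff m (comp (comp f g) h) =
      coeff m (comp (Polynomial.aeval g (trunc (m+1) f)) h) :=
    coeff_comp_congr h (fun n hn => coeff_comp_aeval hg f (Nat.lt_succ_of_le hn))
  rw [h1, comp_aeval hg hh, ← coeff_comp_aeval (constantCoeff_comp' hg) f (Nat.lt_succ_self m)]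

theorem derivativeFun_eq (f : PowerSeries k) : derivativeFun f = d⁄dX k f := rfl

theorem derivativeFun_pow_succ (g : PowerSeries k) (n : ℕ) :
    derivativeFun (g ^ (n + 1)) = (n + 1 : k⟦X⟧) * g ^ n * derivativeFun g := by
  induction n with
  | zero => simp
  | succ n ih =>
      have : g ^ (n + 2) = g ^ (n + 1) * g := by ring
      rw [this, derivativeFun_mul, ih]
      push_cast
      ring_nf

theorem derivativeFun_aeval (g : PowerSeries k) (P : Polynomial k) :
    derivativeFun (Polynomial.aeval g P) =
      Polynomial.aeval g (Polynomial.derivative P) * derivativeFun g := by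
  induction P using Polynomial.induction_on with
  | C a =>
      rw [Polynomial.aeval_C, PowerSeries.algebraMap_apply, Algebra.algebraMap_self_apply,
        derivativeFun_eq, derivativeFun_C, Polynomial.derivative_C, map_zero, zero_mul]
  | add p q hp hq => rw [map_add, derivativeFun_add, hp, hq, map_add, map_add, add_mul]
  | monomial n a _ =>
      have e1 : Polynomial.aeval g (Polynomial.C a * Polynomial.X ^ (n+1)) =
          PowerSeries.C a * g ^ (n + 1) := by
        rw [map_mul, Polynomial.aeval_C, map_pow, Polynomial.aeval_X]; rfl
      rw [e1, derivativeFun_mul, derivativeFun_eq (PowerSeries.C a), derivativeFun_C, smul_zero, add_zero,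
        Polynomial.derivative_C_mul_X_pow]
      rw [map_mul, Polynomial.aeval_C, map_pow, Polynomial.aeval_X]
      rw [smul_eq_mul, derivativeFun_pow_succ, Nat.add_sub_cancel,
        PowerSeries.algebraMap_apply, Algebra.algebraMap_self_apply, map_mul, map_natCast,
        Nat.cast_add, Nat.cast_one]
      ring

theorem derivativeFun_comp {g : PowerSeries k} (hg : constantCoeff g = 0)
    (f : PowerSeries k) :
    derivativeFun (comp f g) = comp (derivativeFun f) g * derivativeFun g := by
  ext m
  set P : Polynomial k := trunc (m + 2) f with hP
  have hL : coeff m (derivativeFun (comp f g)) =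
      coeff m (derivativeFun (Polynomial.aeval g P)) := by
    simp only [derivativeFun_eq]
    rw [coeff_derivativeFun, coeff_derivativeFun,
      coeff_comp_aeval hg f (show m + 1 < m + 2 by omega)]
  rw [hL, derivativeFun_aeval]
  refine (coeff_mul_congr (fun n hn => ?_) (fun n _ => rfl)).symm
  rw [coeff_comp_aeval hg (derivativeFun f) (Nat.lt_succ_of_le hn)]
  congr 1
  simp only [derivativeFun_eq]
  rw [hP, trunc_derivativeFun]

theorem derivativeFun_X : derivativeFun (X : k⟦X⟧) = 1 := by
  ext m
  simp only [derivativeFun_eq]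
  rw [coeff_derivativeFun]
  rcases Nat.eq_zero_or_pos m with rfl | hm
  · simp
  · rw [PowerSeries.coeff_X, if_neg (by omega), zero_mul, PowerSeries.coeff_one,
      if_neg (by omega)]

/-- The set of order-1 solutions of the third Aczél–Jabotinsky equation
`H ∘ Φ = Φ′ · H` is closed under substitution and under compositional inverses,
hence is a group under substitution. -/
theorem aczel_jabotinsky_solutions_group (H : PowerSeries k) (hH : H ≠ 0) :
    (∀ Φ₁ Φ₂ : PowerSeries k,
      constantCoeff Φ₁ = 0 → coeff 1 Φ₁ ≠ 0 →
      constantCoeff Φ₂ = 0 → coeff 1 Φ₂ ≠ 0 →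
      comp H Φ₁ = derivativeFun Φ₁ * H →
      comp H Φ₂ = derivativeFun Φ₂ * H →
      (constantCoeff (comp Φ₁ Φ₂) = 0 ∧ coeff 1 (comp Φ₁ Φ₂) ≠ 0) ∧
        comp H (comp Φ₁ Φ₂) = derivativeFun (comp Φ₁ Φ₂) * H) ∧
    (∀ Φ Ψ : PowerSeries k,
      constantCoeff Φ = 0 → coeff 1 Φ ≠ 0 →
      comp H Φ = derivativeFun Φ * H →
      comp Φ Ψ = X → comp Ψ Φ = X →
      comp H Ψ = derivativeFun Ψ * H) := by
  constructor
  · intro Φ₁ Φ₂ h10 h11 h20 h21 e1 e2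
    refine ⟨⟨?_, ?_⟩, ?_⟩
    · rw [constantCoeff_comp, h10]
    · rw [coeff_one_comp]; exact mul_ne_zero h11 h21
    · rw [← comp_assoc h10 h20 H, e1, comp_mul h20, e2, derivativeFun_comp h20]
      ring
  · intro Φ Ψ hΦ0 hΦ1 e hinv hinv'
    have hΨ0 : constantCoeff Ψ = 0 := by
      have h := congrArg constantCoeff hinv'
      rwa [constantCoeff_comp, PowerSeries.constantCoeff_X] at h
    have hchain : comp (derivativeFun Φ) Ψ * derivativeFun Ψ = 1 := by
      have h := congrArg derivativeFun hinv
      rwa [derivativeFun_comp hΨ0, derivativeFun_X] at h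
    have hHc : comp (comp H Φ) Ψ = H := by
      rw [comp_assoc hΦ0 hΨ0, hinv, comp_X_right]
    rw [e, comp_mul hΨ0] at hHc
    calc comp H Ψ
        = (comp (derivativeFun Φ) Ψ * derivativeFun Ψ) * comp H Ψ := by
          rw [hchain, one_mul]
      _ = derivativeFun Ψ * (comp (derivativeFun Φ) Ψ * comp H Ψ) := by ring
      _ = derivativeFun Ψ * H := by rw [hHc]
end

section
/- Let l ≥ 1 be an integer and let H ∈ k⟦X⟧ have coefficient 0 of X^j for all j ≤ l, coefficient 1 of X^{l+1} (i.e. H = X^{l+1} + Σ_{i≥l+2} h_i X^i). Then there exist T ∈ k⟦X⟧ with constant coefficient 0 and coefficient of X equal to 1, and δ ∈ k, such that H∘T = T′·(X^{l+1} + δ·X^{2l+1}). -/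
open PowerSeries

variable {k : Type*} [Field k] [CharZero k]

set_option linter.unusedSectionVars false
set_option maxHeartbeats 1000000

namespace AJ

lemma coeff_derivativeFun (f : PowerSeries k) (n : ℕ) :
    coeff n (derivativeFun f) = coeff (n + 1) f * (n + 1) :=
  coeff_derivative f n

lemma coeff_pow_eq_zero {P : PowerSeries k} (hP : constantCoeff P = 0)
    {m d : ℕ} (h : d < m) : coeff d (P ^ m) = 0 := by
  have hdvd : (X : PowerSeries k) ^ m ∣ P ^ m := pow_dvd_pow_of_dvd (X_dvd_iff.mpr hP) m
  exact (X_pow_dvd_iff.mp hdvd) d h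

/-- Locality: powers only depend on low coefficients. -/

lemma coeff_pow_congr {P Q : PowerSeries k} (hP : constantCoeff P = 0)
    (hQ : constantCoeff Q = 0) {d : ℕ} (hag : ∀ i, i ≤ d → coeff i P = coeff i Q) :
    ∀ m, 1 ≤ m → ∀ e, e + 1 ≤ d + m → coeff e (P ^ m) = coeff e (Q ^ m) := by
  intro m
  induction m with
  | zero => intro h; omega
  | succ m ih =>
    intro _ e he
    rcases Nat.eq_zero_or_pos m with hm | hm
    · subst hm
      simpa using hag e (by omega)
    · rw [pow_succ', pow_succ', coeff_mul, coeff_mul]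
      apply Finset.sum_congr rfl
      rintro ⟨i, j⟩ hij
      rw [Finset.HasAntidiagonal.mem_antidiagonal] at hij
      rcases Nat.eq_zero_or_pos i with hi | hi
      · subst hi
        rw [coeff_zero_eq_constantCoeff, hP, hQ, zero_mul, zero_mul]
      · by_cases hj : j < m
        · rw [coeff_pow_eq_zero hP hj, coeff_pow_eq_zero hQ hj, mul_zero, mul_zero]
        · push_neg at hj
          have hi' : i ≤ d := by omega
          rw [hag i hi', ih hm j (by omega)]

/-- Diagonal coefficient of a power. -/

lemma coeff_pow_self {P : PowerSeries k} (hP : constantCoeff P = 0) :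
    ∀ m, coeff m (P ^ m) = (coeff 1 P) ^ m := by
  intro m
  induction m with
  | zero => simp
  | succ m ih =>
    rw [pow_succ', coeff_mul]
    rw [Finset.sum_eq_single (1, m)]
    · rw [ih, pow_succ']
    · rintro ⟨i, j⟩ hij hne
      rw [Finset.HasAntidiagonal.mem_antidiagonal] at hij
      rcases Nat.eq_zero_or_pos i with hi | hi
      · subst hi
        rw [coeff_zero_eq_constantCoeff, hP, zero_mul]
      · have : j < m := by
          rcases Nat.lt_or_ge j m with h | h
          · exact h
          · exfalso; apply hne
            have : i = 1 := by omega
            subst this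
            simp only [Prod.mk.injEq, true_and]
            omega
        rw [coeff_pow_eq_zero hP this, mul_zero]
    · intro h
      exfalso; apply h
      rw [Finset.HasAntidiagonal.mem_antidiagonal]
      omega

lemma coeff_add_C_X_pow {P : PowerSeries k} (hP : constantCoeff P = 0) (c : k)
    {n m e : ℕ} (hn : 2 ≤ n) (hm : 1 ≤ m) (he : e + 3 ≤ m + n) :
    coeff (n + e) ((P + C c * X ^ n) ^ m)
      = coeff (n + e) (P ^ m) + m * c * coeff e (P ^ (m - 1)) := by
  rw [add_pow, map_sum]
  have key : ∀ i ∈ Finset.range (m + 1),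
      coeff (n + e) (P ^ i * (C c * X ^ n) ^ (m - i) * (Nat.choose m i : PowerSeries k))
      = (if i = m then coeff (n + e) (P ^ m) else 0)
        + (if i = m - 1 then m * c * coeff e (P ^ (m - 1)) else 0) := by
    intro i hi
    rw [Finset.mem_range] at hi
    rw [show (Nat.choose m i : PowerSeries k) = C (Nat.choose m i : k) from
      (map_natCast (C) _), coeff_mul_C]
    by_cases h1 : i = m
    · subst h1
      rw [Nat.sub_self, pow_zero, mul_one, Nat.choose_self, Nat.cast_one, mul_one,
        if_pos rfl, if_neg (by omega), add_zero]
    · by_cases h2 : i = m - 1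
      · subst h2
        have hch : (m.choose (m-1) : k) = (m : k) := by
          rw [← Nat.choose_symm (by omega : m - 1 ≤ m), show m - (m-1) = 1 by omega,
            Nat.choose_one_right]
        rw [if_neg h1, if_pos rfl, zero_add, show m - (m-1) = 1 by omega, pow_one, hch,
          show P ^ (m-1) * (C c * X ^ n) = (P ^ (m-1) * C c) * X ^ n by ring,
          coeff_mul_X_pow', if_pos (by omega : n ≤ n + e), Nat.add_sub_cancel_left,
          coeff_mul_C]
        ring
      · have hj2 : 2 ≤ m - i := by omega
        have hij2 : i + (m - i) = m := by omega
        rw [if_neg h1, if_neg h2, add_zero, mul_pow, ← map_pow, ← pow_mul,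
          show P ^ i * (C (c ^ (m-i)) * X ^ (n * (m-i)))
            = (P ^ i * C (c ^ (m-i))) * X ^ (n * (m-i)) by ring,
          coeff_mul_X_pow']
        by_cases h3 : n * (m - i) ≤ n + e
        · rw [if_pos h3, coeff_mul_C]
          have h5 : n + e < i + n * (m - i) := by
            have hj2' : (2:ℤ) ≤ ((m - i : ℕ):ℤ) := by exact_mod_cast hj2
            have hn' : (2:ℤ) ≤ (n:ℤ) := by exact_mod_cast hn
            have he' : (e:ℤ) + 3 ≤ (m:ℤ) + n := by exact_mod_cast he
            have hij' : (i:ℤ) + ((m - i : ℕ):ℤ) = m := by exact_mod_cast hij2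
            have : (n:ℤ) + e < i + n * ((m - i : ℕ):ℤ) := by
              nlinarith [mul_nonneg (by linarith : (0:ℤ) ≤ ((m - i : ℕ):ℤ) - 2)
                (by linarith : (0:ℤ) ≤ (n:ℤ) - 1)]
            exact_mod_cast this
          rw [coeff_pow_eq_zero hP (show n + e - n * (m - i) < i by omega), zero_mul, zero_mul]
        · rw [if_neg h3, zero_mul]
  rw [Finset.sum_congr rfl key, Finset.sum_add_distrib, Finset.sum_ite_eq' _ m,
    Finset.sum_ite_eq' _ (m - 1),
    if_pos (Finset.mem_range.mpr (by omega)), if_pos (Finset.mem_range.mpr (by omega))]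

noncomputable def E (l : ℕ) (H P : PowerSeries k) (δ : k) : PowerSeries k :=
  comp H P - derivativeFun P * (X ^ (l+1) + C δ * X ^ (2*l+1))

lemma coeff_E (l : ℕ) (H P : PowerSeries k) (δ : k) (m : ℕ) :
    coeff m (E l H P δ)
      = (∑ j ∈ Finset.range (m+1), coeff j H * coeff m (P ^ j))
        - ((if l+1 ≤ m then coeff (m - (l+1)) (derivativeFun P) else 0)
           + δ * (if 2*l+1 ≤ m then coeff (m - (2*l+1)) (derivativeFun P) else 0)) := by
  rw [E, map_sub, comp, coeff_mk, mul_add, map_add, coeff_mul_X_pow',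
    show derivativeFun P * (C δ * X ^ (2*l+1)) = C δ * (derivativeFun P * X ^ (2*l+1)) by
      ring,
    coeff_C_mul, coeff_mul_X_pow']

lemma derivativeFun_X' : derivativeFun (X : PowerSeries k) = 1 := by
  ext i
  rw [coeff_derivativeFun, coeff_one, coeff_X]
  rcases Nat.eq_zero_or_pos i with h | h
  · subst h; simp
  · rw [if_neg (by omega), if_neg (by omega), zero_mul]

lemma coeff_E_X {l : ℕ} (hl : 1 ≤ l) {H : PowerSeries k}
    (hHlow : ∀ j, j ≤ l → coeff j H = 0) (hHlead : coeff (l+1) H = 1) (δ : k)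
    {m : ℕ} (hm : m ≤ l + 1) : coeff m (E l H X δ) = 0 := by
  rw [coeff_E, derivativeFun_X']
  have hsum : (∑ j ∈ Finset.range (m+1), coeff j H * coeff m ((X:PowerSeries k) ^ j))
      = coeff m H := by
    rw [Finset.sum_eq_single m]
    · rw [coeff_X_pow, if_pos rfl, mul_one]
    · intro j _ hj
      rw [coeff_X_pow, if_neg (fun h => hj h.symm), mul_zero]
    · intro h; exact absurd (Finset.mem_range.mpr (by omega)) h
  rw [hsum]
  rcases Nat.lt_or_ge m (l+1) with h | h
  · rw [hHlow m (by omega), if_neg (by omega), if_neg (by omega)]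
    ring
  · have hm' : m = l + 1 := by omega
    subst hm'
    rw [hHlead, if_pos le_rfl, if_neg (by omega), coeff_one, if_pos (by omega)]
    ring

lemma coeff_E_congr {l : ℕ} {H : PowerSeries k} (hHlow : ∀ j, j ≤ l → coeff j H = 0)
    {P Q : PowerSeries k} (hP : constantCoeff P = 0) (hQ : constantCoeff Q = 0)
    {n : ℕ} (hag : ∀ i, i ≤ n → coeff i P = coeff i Q) (δ : k)
    {m : ℕ} (hm : m ≤ l + n) :
    coeff m (E l H P δ) = coeff m (E l H Q δ) := by
  rw [coeff_E, coeff_E]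
  congr 1
  · apply Finset.sum_congr rfl
    intro j hj
    rw [Finset.mem_range] at hj
    rcases Nat.lt_or_ge j (l+1) with h | h
    · rw [hHlow j (by omega), zero_mul, zero_mul]
    · rw [coeff_pow_congr hP hQ hag j (by omega) m (by omega)]
  · congr 1
    · rcases Nat.lt_or_ge m (l+1) with h | h
      · rw [if_neg (by omega), if_neg (by omega)]
      · rw [if_pos (by omega), if_pos (by omega), coeff_derivativeFun, coeff_derivativeFun,
          hag (m - (l+1) + 1) (by omega)]
    · rcases Nat.lt_or_ge m (2*l+1) with h | h
      · rw [if_neg (by omega), if_neg (by omega)]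
      · rw [if_pos (by omega), if_pos (by omega), coeff_derivativeFun, coeff_derivativeFun,
          hag (m - (2*l+1) + 1) (by omega)]

lemma coeff_E_slope {l n : ℕ} (hl : 1 ≤ l) (hn : 1 ≤ n) {H P : PowerSeries k}
    (hHlow : ∀ j, j ≤ l → coeff j H = 0) (hHlead : coeff (l+1) H = 1)
    (hP : constantCoeff P = 0) (hP1 : coeff 1 P = 1) (c δ : k) :
    coeff (l+n+1) (E l H (P + C c * X ^ (n+1)) δ)
      = coeff (l+n+1) (E l H P δ) + ((l:k) - (n:k)) * c := by
  set Q : PowerSeries k := P + C c * X ^ (n+1) with hQdef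
  have hQ : constantCoeff Q = 0 := by
    rw [hQdef, map_add, hP, zero_add, map_mul, constantCoeff_C, map_pow, constantCoeff_X,
      zero_pow (by omega), mul_zero]
  have hcoeffQ : ∀ i, coeff i Q = coeff i P + (if i = n+1 then c else 0) := by
    intro i
    rw [hQdef, map_add, coeff_C_mul_X_pow]
  have hag : ∀ i, i ≤ n → coeff i P = coeff i Q := by
    intro i hi
    rw [hcoeffQ, if_neg (by omega), add_zero]
  have hsum : (∑ j ∈ Finset.range (l+n+1+1), coeff j H * coeff (l+n+1) (Q ^ j))
      = (∑ j ∈ Finset.range (l+n+1+1), coeff j H * coeff (l+n+1) (P ^ j))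
        + ((l:k)+1) * c := by
    have hterm : ∀ j ∈ Finset.range (l+n+1+1),
        coeff j H * coeff (l+n+1) (Q ^ j)
        = coeff j H * coeff (l+n+1) (P ^ j)
          + (if j = l+1 then ((l:k)+1) * c else 0) := by
      intro j hj
      rw [Finset.mem_range] at hj
      rcases Nat.lt_or_ge j (l+1) with h | h
      · rw [hHlow j (by omega), zero_mul, zero_mul, if_neg (by omega), zero_add]
      · rcases Nat.eq_or_lt_of_le h with h1 | h1
        · have hb := coeff_add_C_X_pow hP c (show 2 ≤ n+1 by omega) (show 1 ≤ l+1 by omega)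
            (show l + 3 ≤ (l+1) + (n+1) by omega)
          rw [← h1, if_pos rfl, show l+n+1 = (n+1)+l by omega, ← hQdef] at *
          rw [hb, show l+1-1 = l by omega, coeff_pow_self hP, hP1, one_pow, mul_one, ← h1,
            hHlead, one_mul, one_mul]
          push_cast
          ring
        · rw [coeff_pow_congr hP hQ hag j (by omega) (l+n+1) (by omega), if_neg (by omega),
            add_zero]
    rw [Finset.sum_congr rfl hterm, Finset.sum_add_distrib, Finset.sum_ite_eq' _ (l+1),
      if_pos (Finset.mem_range.mpr (by omega))]
  have hd1 : coeff (l+n+1-(l+1)) (derivativeFun Q)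
      = coeff (l+n+1-(l+1)) (derivativeFun P) + ((n:k)+1) * c := by
    rw [show l+n+1-(l+1) = n by omega, coeff_derivativeFun, coeff_derivativeFun, hcoeffQ,
      if_pos rfl]
    push_cast
    ring
  have hd2 : (if 2*l+1 ≤ l+n+1 then coeff (l+n+1-(2*l+1)) (derivativeFun Q) else 0)
      = (if 2*l+1 ≤ l+n+1 then coeff (l+n+1-(2*l+1)) (derivativeFun P) else 0) := by
    rcases Nat.lt_or_ge (l+n+1) (2*l+1) with h | h
    · rw [if_neg (by omega), if_neg (by omega)]
    · rw [if_pos (by omega), if_pos (by omega), coeff_derivativeFun, coeff_derivativeFun,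
        hcoeffQ, if_neg (by omega), add_zero]
  rw [coeff_E, coeff_E, hsum, hd1, hd2, if_pos (show l+1 ≤ l+n+1 by omega),
    if_pos (show l+1 ≤ l+n+1 by omega)]
  push_cast
  ring

/-- `coeff m (E l H P δ)` does not involve `δ` for `m < 2l+1`. -/
lemma coeff_E_delta_indep {l : ℕ} {H P : PowerSeries k} {δ : k} {m : ℕ} (hm : m < 2*l+1) :
    coeff m (E l H P δ) = coeff m (E l H P 0) := by
  have h : ¬(2*l+1 ≤ m) := by omega
  rw [coeff_E, coeff_E, if_neg h, mul_zero, mul_zero]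

/-- The δ-dependence at the critical degree. -/
lemma coeff_E_crit (l : ℕ) (H P : PowerSeries k) (δ : k) :
    coeff (2*l+1) (E l H P δ) = coeff (2*l+1) (E l H P 0) - δ * coeff 1 P := by
  rw [coeff_E, coeff_E, if_pos (le_refl (2*l+1)), Nat.sub_self, coeff_derivativeFun P 0]
  push_cast
  ring

/-- The approximating sequence. -/
noncomputable def Sseq (l : ℕ) (H : PowerSeries k) (δ : k) : ℕ → PowerSeries k
  | 0 => X
  | (n+1) => Sseq l H δ n +
      C (if n = 0 ∨ n = l then 0
           else coeff (l+n+1) (E l H (Sseq l H δ n) δ) / ((n:k) - (l:k))) * X ^ (n+1)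

lemma Sseq_const (l : ℕ) (H : PowerSeries k) (δ : k) :
    ∀ n, constantCoeff (Sseq l H δ n) = 0 := by
  intro n
  induction n with
  | zero => simp [Sseq]
  | succ n ih =>
    rw [Sseq, map_add, ih, zero_add, map_mul, map_pow, constantCoeff_X,
      zero_pow (by omega), mul_zero]

lemma Sseq_one (l : ℕ) (H : PowerSeries k) (δ : k) :
    ∀ n, coeff 1 (Sseq l H δ n) = 1 := by
  intro n
  induction n with
  | zero => simp [Sseq]
  | succ n ih =>
    rw [Sseq, map_add, ih, coeff_C_mul_X_pow]
    rcases Nat.eq_zero_or_pos n with h | h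
    · subst h; simp
    · rw [if_neg (by omega), add_zero]

lemma Sseq_stable (l : ℕ) (H : PowerSeries k) (δ : k) :
    ∀ n m i, n ≤ m → i ≤ n → coeff i (Sseq l H δ m) = coeff i (Sseq l H δ n) := by
  intro n m
  induction m with
  | zero =>
    intro i h1 h2
    have hn0 : n = 0 := by omega
    rw [hn0]
  | succ m ih =>
    intro i h1 h2
    rcases Nat.eq_or_lt_of_le h1 with h | h
    · rw [h]
    · rw [Sseq, map_add, coeff_C_mul_X_pow, if_neg (by omega), add_zero]
      exact ih i (by omega) h2

lemma Sseq_delta_indep (l : ℕ) (H : PowerSeries k) (δ : k) (hl : 1 ≤ l) :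
    ∀ n, n ≤ l → Sseq l H δ n = Sseq l H 0 n := by
  intro n
  induction n with
  | zero => intro _; rfl
  | succ n ih =>
    intro h
    rw [Sseq, Sseq, ih (by omega)]
    congr 2
    rcases Nat.eq_zero_or_pos n with h0 | h0
    · rw [if_pos (Or.inl h0), if_pos (Or.inl h0)]
    · rw [if_neg (by omega), if_neg (by omega),
        coeff_E_delta_indep (by omega : l+n+1 < 2*l+1)]

/-- The normal-form constant. -/
noncomputable def Del (l : ℕ) (H : PowerSeries k) : k :=
  coeff (2*l+1) (E l H (Sseq l H 0 l) 0)

/-- The normalizing transformation. -/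
noncomputable def Tfun (l : ℕ) (H : PowerSeries k) : PowerSeries k :=
  PowerSeries.mk fun j => coeff j (Sseq l H (Del l H) j)

lemma coeff_Tfun (l : ℕ) (H : PowerSeries k) {j n : ℕ} (h : j ≤ n) :
    coeff j (Tfun l H) = coeff j (Sseq l H (Del l H) n) := by
  rw [Tfun, coeff_mk, Sseq_stable l H _ j n j h le_rfl]

lemma vanish {l : ℕ} (hl : 1 ≤ l) {H : PowerSeries k}
    (hHlow : ∀ j, j ≤ l → coeff j H = 0) (hHlead : coeff (l+1) H = 1) :
    ∀ n, 1 ≤ n → ∀ m, m ≤ l + n →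
      coeff m (E l H (Sseq l H (Del l H) n) (Del l H)) = 0 := by
  intro n
  induction n with
  | zero => omega
  | succ n ih =>
    intro _ m hm
    rcases Nat.eq_zero_or_pos n with h0 | h0
    · -- n = 0 : Sseq 1 = X
      subst h0
      have hS1 : Sseq l H (Del l H) 1 = X := by
        rw [Sseq, if_pos (Or.inl rfl), map_zero, zero_mul, add_zero]; rfl
      rw [hS1]
      exact coeff_E_X hl hHlow hHlead _ (by omega)
    · -- n ≥ 1
      rcases Nat.lt_or_ge m (l+n+1) with hm' | hm'
      · -- low degrees: locality + IH
        have hag : ∀ i, i ≤ n → coeff i (Sseq l H (Del l H) (n+1))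
            = coeff i (Sseq l H (Del l H) n) :=
          fun i hi => Sseq_stable l H _ n (n+1) i (by omega) hi
        rw [coeff_E_congr hHlow (Sseq_const l H _ _) (Sseq_const l H _ _) hag _
          (show m ≤ l + n by omega)]
        exact ih h0 m (by omega)
      · have hm'' : m = l+n+1 := by omega
        subst hm''
        by_cases hnl : n = l
        · -- critical degree: δ chosen correctly
          subst hnl
          have hSs : Sseq n H (Del n H) (n+1) = Sseq n H (Del n H) n := by
            rw [Sseq, if_pos (Or.inr rfl), map_zero, zero_mul, add_zero]
          rw [show n+n+1 = 2*n+1 by omega, hSs, coeff_E_crit,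
            Sseq_delta_indep n H _ hl n le_rfl, Sseq_one, mul_one, Del]
          ring
        · -- generic degree: solve for the new coefficient
          have hcne : ((l:k) - (n:k)) ≠ 0 := by
            rw [sub_ne_zero]
            exact fun h => hnl (Nat.cast_injective h).symm
          rw [Sseq, if_neg (by omega)]
          have h2 : ((n:k) - (l:k)) ≠ 0 := by
            rw [sub_ne_zero]
            exact fun h => hnl (Nat.cast_injective h)
          rw [coeff_E_slope hl h0 hHlow hHlead (Sseq_const l H _ _) (Sseq_one l H _ _) _ _]
          field_simp
          ring
  
lemma E_Tfun_eq_zero {l : ℕ} (hl : 1 ≤ l) {H : PowerSeries k}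
    (hHlow : ∀ j, j ≤ l → coeff j H = 0) (hHlead : coeff (l+1) H = 1) :
    E l H (Tfun l H) (Del l H) = 0 := by
  ext m
  rw [map_zero]
  have hTconst : constantCoeff (Tfun l H) = 0 := by
    rw [← coeff_zero_eq_constantCoeff, coeff_Tfun l H (le_refl 0),
      coeff_zero_eq_constantCoeff]
    exact Sseq_const l H _ 0
  have hag : ∀ i, i ≤ m+1 → coeff i (Tfun l H)
      = coeff i (Sseq l H (Del l H) (m+1)) :=
    fun i hi => coeff_Tfun l H hi
  rw [coeff_E_congr hHlow hTconst (Sseq_const l H _ _) hag _ (show m ≤ l + (m+1) by omega)]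
  exact vanish hl hHlow hHlead (m+1) (by omega) m (by omega)

end AJ

/-- Every generator `H = X^(l+1) + Σ_{i ≥ l+2} h_i X^i` can be brought to the
normal form `X^(l+1) + δ X^(2l+1)` by a normalized transformation `T`:
`H ∘ T = T′ · (X^(l+1) + δ X^(2l+1))`. -/
theorem aczel_jabotinsky_normal_form (l : ℕ) (hl : 1 ≤ l) (H : PowerSeries k)
    (hHlow : ∀ j, j ≤ l → coeff j H = 0)
    (hHlead : coeff (l + 1) H = 1) :
    ∃ T : PowerSeries k, ∃ δ : k,
      constantCoeff T = 0 ∧ coeff 1 T = 1 ∧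
      comp H T = derivativeFun T * (X ^ (l + 1) + C δ * X ^ (2 * l + 1)) := by
  refine ⟨AJ.Tfun l H, AJ.Del l H, ?_, ?_, ?_⟩
  · rw [← coeff_zero_eq_constantCoeff, AJ.coeff_Tfun l H (le_refl 0),
      coeff_zero_eq_constantCoeff]
    exact AJ.Sseq_const l H _ 0
  · rw [AJ.coeff_Tfun l H (le_refl 1), AJ.Sseq_one]
  · have h := AJ.E_Tfun_eq_zero hl hHlow hHlead
    rw [AJ.E] at h
    have h2 := sub_eq_zero.mp h
    convert h2 using 3 <;> ring
end

section
/- Let H ∈ k⟦X⟧ have constant coefficient 0 and coefficient of X equal to 1 (i.e. H = X + Σ_{i≥2} h_i X^i). Then there exists a unique T ∈ k⟦X⟧ with constant coefficient 0 and coefficient of X equal to 1 such that H∘T = T′·X. -/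
open PowerSeries

variable {k : Type*} [Field k] [CharZero k]

section Aux

variable {K : Type*} [Field K]

lemma aj_coeff_pow_zero {A : PowerSeries K} (hA : constantCoeff A = 0)
    {n b : ℕ} (hb : b < n) : coeff b (A ^ n) = 0 := by
  obtain ⟨c, rfl⟩ := PowerSeries.X_dvd_iff.mpr hA
  rw [mul_pow, mul_comm, PowerSeries.coeff_mul_X_pow']
  rw [if_neg (by omega)]

lemma aj_coeff_pow_congr {A B : PowerSeries K} (hA : constantCoeff A = 0)
    (hB : constantCoeff B = 0) {m : ℕ} (h : ∀ i < m, coeff i A = coeff i B) :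
    ∀ n, 1 ≤ n → ∀ j, j + 1 < m + n → coeff j (A ^ n) = coeff j (B ^ n) := by
  intro n hn
  induction n, hn using Nat.le_induction with
  | base => intro j hj; simpa using h j (by omega)
  | succ n hn ih =>
    intro j hj
    rw [pow_succ', pow_succ', coeff_mul, coeff_mul]
    refine Finset.sum_congr rfl fun p hp => ?_
    rw [Finset.HasAntidiagonal.mem_antidiagonal] at hp
    rcases Nat.eq_zero_or_pos p.1 with h1 | h1
    · rw [h1, coeff_zero_eq_constantCoeff, hA, hB, zero_mul, zero_mul]
    · rcases lt_or_ge p.2 n with h2 | h2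
      · rw [aj_coeff_pow_zero hA h2, aj_coeff_pow_zero hB h2, mul_zero, mul_zero]
      · rw [h p.1 (by omega), ih p.2 (by omega)]

/-- `coeff m (comp H T)` when `m ≥ 1`, extracting the `n = 0, 1` terms. -/
lemma aj_coeff_comp {H T : PowerSeries K} (hH0 : constantCoeff H = 0)
    (hH1 : coeff 1 H = 1) {m : ℕ} (hm : 1 ≤ m) :
    coeff m (comp H T) = coeff m T +
      ∑ n ∈ Finset.Icc 2 m, coeff n H * coeff m (T ^ n) := by
  rw [comp, coeff_mk]
  have hset : Finset.range (m + 1) = insert 0 (insert 1 (Finset.Icc 2 m)) := by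
    ext i; simp only [Finset.mem_range, Finset.mem_insert, Finset.mem_Icc]; omega
  rw [hset, Finset.sum_insert (by simp), Finset.sum_insert (by simp)]
  have h0 : coeff 0 H = 0 := by rw [coeff_zero_eq_constantCoeff]; exact hH0
  rw [h0, hH1, pow_one]
  ring

lemma aj_coeff_rhs {T : PowerSeries K} {m : ℕ} (hm : 1 ≤ m) :
    coeff m (derivativeFun T * X) = coeff m T * (m : K) := by
  obtain ⟨j, rfl⟩ := Nat.exists_eq_add_of_le hm
  rw [add_comm, coeff_succ_mul_X, show derivativeFun T = derivative K T from rfl, coeff_derivativeFun]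
  push_cast
  ring

/-- The equation `comp H T = T' * X` is equivalent to a coefficientwise recursion. -/
lemma aj_key {H T : PowerSeries K} (hH0 : constantCoeff H = 0)
    (hH1 : coeff 1 H = 1) :
    comp H T = derivativeFun T * X ↔ ∀ m, 1 ≤ m →
      coeff m T * ((m : K) - 1) =
        ∑ n ∈ Finset.Icc 2 m, coeff n H * coeff m (T ^ n) := by
  rw [PowerSeries.ext_iff]
  constructor
  · intro h m hm
    have := h m
    rw [aj_coeff_comp hH0 hH1 hm, aj_coeff_rhs hm] at this
    linear_combination -this
  · intro h m
    rcases Nat.eq_zero_or_pos m with rfl | hm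
    · rw [comp, coeff_mk]
      simp [coeff_zero_eq_constantCoeff, hH0]
    · rw [aj_coeff_comp hH0 hH1 hm, aj_coeff_rhs hm]
      linear_combination -(h m hm)

end Aux

/-- The recursively defined coefficients of the solution `T`. -/
noncomputable def ajCoeff (H : PowerSeries k) : ℕ → k
  | 0 => 0
  | 1 => 1
  | m + 2 => ((m : k) + 1)⁻¹ * ∑ n ∈ Finset.Icc 2 (m + 2),
      coeff n H * coeff (m + 2)
        ((PowerSeries.mk fun i => if h : i < m + 2 then ajCoeff H i else 0) ^ n)
  termination_by m => m
  decreasing_by exact h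

lemma ajCoeff_zero (H : PowerSeries k) : ajCoeff H 0 = 0 := by rw [ajCoeff]

lemma ajCoeff_one (H : PowerSeries k) : ajCoeff H 1 = 1 := by rw [ajCoeff]

/-- The truncated series used in the recursion has the same high coefficients of powers
as the full series. -/
lemma ajCoeff_pow_eq (H : PowerSeries k) (m : ℕ) (hm : 2 ≤ m) {n : ℕ}
    (hn2 : 2 ≤ n) :
    coeff m ((PowerSeries.mk fun i => if _ : i < m then ajCoeff H i else 0) ^ n)
      = coeff m ((PowerSeries.mk (ajCoeff H)) ^ n) := by
  have hA : constantCoeff (PowerSeries.mk fun i => if _ : i < m then ajCoeff H i else 0) = 0 := by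
    rw [constantCoeff_mk]; rw [dif_pos (by omega)]; exact ajCoeff_zero H
  have hB : constantCoeff (PowerSeries.mk (ajCoeff H)) = 0 := by
    rw [constantCoeff_mk]; exact ajCoeff_zero H
  have hagree : ∀ i < m, coeff i (PowerSeries.mk fun i => if _ : i < m then ajCoeff H i else 0)
      = coeff i (PowerSeries.mk (ajCoeff H)) := by
    intro i hi
    rw [coeff_mk, coeff_mk, dif_pos hi]
  exact aj_coeff_pow_congr hA hB hagree n (by omega) m (by omega)

lemma ajCoeff_spec (H : PowerSeries k) {m : ℕ} (hm : 1 ≤ m) :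
    ajCoeff H m * ((m : k) - 1) =
      ∑ n ∈ Finset.Icc 2 m, coeff n H * coeff m ((PowerSeries.mk (ajCoeff H)) ^ n) := by
  match m, hm with
  | 1, _ => simp [ajCoeff_one]
  | (j + 2), _ =>
    have hne : ((j : k) + 1) ≠ 0 := by
      have : ((j + 1 : ℕ) : k) ≠ 0 := Nat.cast_ne_zero.mpr (by omega)
      push_cast at this; exact this
    have hc : ((j + 2 : ℕ) : k) - 1 = (j : k) + 1 := by push_cast; ring
    rw [hc, ajCoeff, inv_mul_eq_div, div_mul_cancel₀ _ hne]
    refine Finset.sum_congr rfl fun n hn => ?_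
    rw [Finset.mem_Icc] at hn
    rw [ajCoeff_pow_eq H (j + 2) (by omega) hn.1]

/-- For a generator `H = X + Σ_{i ≥ 2} h_i X^i` there is a unique normalized `T`
with `H ∘ T = T′ · X`. -/
theorem aczel_jabotinsky_normal_form_l_zero (H : PowerSeries k)
    (hH0 : constantCoeff H = 0) (hH1 : coeff 1 H = 1) :
    ∃! T : PowerSeries k,
      constantCoeff T = 0 ∧ coeff 1 T = 1 ∧
      comp H T = derivativeFun T * X := by
  set T : PowerSeries k := PowerSeries.mk (ajCoeff H) with hT
  have hT0 : constantCoeff T = 0 := by rw [hT, constantCoeff_mk, ajCoeff_zero]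
  have hT1 : coeff 1 T = 1 := by rw [hT, coeff_mk, ajCoeff_one]
  refine ⟨T, ⟨hT0, hT1, ?_⟩, ?_⟩
  · rw [aj_key hH0 hH1]
    intro m hm
    have := ajCoeff_spec H hm
    rw [← hT] at this
    rw [hT, coeff_mk, ← hT]
    exact this
  · rintro U ⟨hU0, hU1, hUeq⟩
    have hU := (aj_key hH0 hH1).mp hUeq
    ext m
    induction m using Nat.strong_induction_on with
    | _ m ih =>
      match m with
      | 0 => rw [coeff_zero_eq_constantCoeff, hU0, ← coeff_zero_eq_constantCoeff, hT,
          coeff_mk, ajCoeff_zero]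
      | 1 => rw [hU1, hT, coeff_mk, ajCoeff_one]
      | (j + 2) =>
        have hm : 1 ≤ j + 2 := by omega
        have hne : ((j + 2 : ℕ) : k) - 1 ≠ 0 := by
          have : ((j + 1 : ℕ) : k) ≠ 0 := Nat.cast_ne_zero.mpr (by omega)
          push_cast at this ⊢
          intro hcon; exact this (by linear_combination hcon)
        have h1 := hU (j + 2) hm
        have h2 := ajCoeff_spec H hm
        have hpow : ∀ n ∈ Finset.Icc 2 (j + 2),
            coeff n H * coeff (j + 2) (U ^ n)
              = coeff n H * coeff (j + 2) (T ^ n) := by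
          intro n hn
          rw [Finset.mem_Icc] at hn
          congr 1
          have hagree : ∀ i < j + 2, coeff i U = coeff i T := fun i hi => ih i hi
          exact aj_coeff_pow_congr hU0 hT0 hagree n (by omega) (j + 2) (by omega)
        rw [Finset.sum_congr rfl hpow] at h1
        rw [← hT] at h2
        exact mul_right_cancel₀ hne (by rw [h1, hT, coeff_mk, ← hT, h2])
end

section
/- Let l ≥ 1 and let s ≥ 2l+1 be a natural number, let δ ∈ k, and set H̃ = X^{l+1} + δ·X^{2l+1}. Then for every c₁ ∈ k with c₁^l = 1, every c_{l+1} ∈ k, and every choice of c_{s−l+1}, …, c_s ∈ k, there exist unique values c_j ∈ k for the remaining indices j ∈ {2, …, s} \ ({l+1} ∪ {s−l+1, …, s}) such that the power series Φ = c₁·X + Σ_{j=2}^{s} c_j X^j satisfies H̃∘Φ ≡ Φ′·H̃ mod X^{s+1}. Moreover, every Φ of order 1 satisfying H̃∘Φ ≡ Φ′·H̃ mod X^{s+1} has (coefficient of X in Φ)^l = 1. -/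
open PowerSeries

variable {k : Type*} [Field k] [CharZero k]

set_option linter.unusedSectionVars false
set_option linter.unnecessarySimpa false
set_option linter.unreachableTactic false
set_option linter.unusedTactic false
set_option linter.unusedVariables false

lemma coeff_derivativeFun' (f : PowerSeries k) (n : ℕ) :
    coeff n (derivativeFun f) = coeff (n + 1) f * (n + 1) :=
  coeff_derivative f n

lemma constantCoeff_derivativeFun' (f : PowerSeries k) :
    constantCoeff (derivativeFun f) = coeff 1 f := by
  rw [← coeff_zero_eq_constantCoeff_apply, coeff_derivativeFun']
  simp

/-- The normal form generator. -/
noncomputable def Htilde (l : ℕ) (δ : k) : PowerSeries k :=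
  X ^ (l + 1) + C δ * X ^ (2 * l + 1)




noncomputable def Ee (l : ℕ) (δ : k) (Φ : PowerSeries k) : PowerSeries k :=
  Φ ^ (l+1) + C δ * Φ ^ (2*l+1) - derivativeFun Φ * Htilde l δ

lemma coeff_pow_eq_zero {Φ : PowerSeries k} (hΦ : constantCoeff Φ = 0) {m n : ℕ} (h : m < n) :
    coeff m (Φ ^ n) = 0 :=
  (X_pow_dvd_iff.1 (pow_dvd_pow_of_dvd (X_dvd_iff.2 hΦ) n)) m h

lemma coeff_mul_of_dvd {a b : PowerSeries k} {p q : ℕ}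
    (ha : (X : PowerSeries k)^p ∣ a) (hb : (X : PowerSeries k)^q ∣ b) :
    coeff (p+q) (a*b) = coeff p a * coeff q b := by
  obtain ⟨a', rfl⟩ := ha; obtain ⟨b', rfl⟩ := hb
  have h1 := coeff_X_pow_mul (a' * b') (p + q) 0
  have h2 := coeff_X_pow_mul a' p 0
  have h3 := coeff_X_pow_mul b' q 0
  simp only [zero_add] at h1 h2 h3
  rw [mul_mul_mul_comm, ← pow_add, h1, h2, h3, coeff_zero_eq_constantCoeff, map_mul]

lemma coeff_pow_mul_pow {Φ Ψ : PowerSeries k} (hΦ : constantCoeff Φ = 0)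
    (hΨ : constantCoeff Ψ = 0) (m n : ℕ) :
    coeff (m + n) (Φ ^ m * Ψ ^ n) = (coeff 1 Φ)^m * (coeff 1 Ψ)^n := by
  have := coeff_mul_of_dvd (k := k) (pow_dvd_pow_of_dvd (X_dvd_iff.2 hΦ) m)
    (pow_dvd_pow_of_dvd (X_dvd_iff.2 hΨ) n)
  rw [this]
  congr 1
  · obtain ⟨f, rfl⟩ := X_dvd_iff.2 hΦ
    rw [mul_pow]
    have := coeff_X_pow_mul (f ^ m) m 0
    simp only [zero_add] at this
    rw [this]
    rw [coeff_zero_eq_constantCoeff, map_pow]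
    congr 1
    simpa using (coeff_succ_X_mul 0 f).symm
  · obtain ⟨f, rfl⟩ := X_dvd_iff.2 hΨ
    rw [mul_pow]
    have := coeff_X_pow_mul (f ^ n) n 0
    simp only [zero_add] at this
    rw [this, coeff_zero_eq_constantCoeff, map_pow]
    congr 1
    simpa using (coeff_succ_X_mul 0 f).symm

lemma coeff_pow_self {Φ : PowerSeries k} (hΦ : constantCoeff Φ = 0) (n : ℕ) :
    coeff n (Φ ^ n) = (coeff 1 Φ)^n := by
  simpa using coeff_pow_mul_pow hΦ hΦ n 0

lemma coeff_mul_Htilde (l : ℕ) (δ : k) (f : PowerSeries k) (m : ℕ) :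
    coeff m (f * Htilde l δ) =
      (if l+1 ≤ m then coeff (m - (l+1)) f else 0)
      + δ * (if 2*l+1 ≤ m then coeff (m - (2*l+1)) f else 0) := by
  rw [Htilde, mul_add, map_add, coeff_mul_X_pow', mul_left_comm, coeff_C_mul, coeff_mul_X_pow']

lemma derivativeFun_sub (f g : PowerSeries k) :
    derivativeFun (f - g) = derivativeFun f - derivativeFun g := by
  ext n
  simp only [coeff_derivativeFun', map_sub]
  ring


lemma comp_Htilde {l : ℕ} (hl : 1 ≤ l) (δ : k) {Φ : PowerSeries k}
    (hΦ : constantCoeff Φ = 0) :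
    comp (Htilde l δ) Φ = Φ ^ (l+1) + C δ * Φ ^ (2*l+1) := by
  ext m
  rw [comp, coeff_mk]
  have hcoeff : ∀ n, coeff n (Htilde l δ) * coeff m (Φ ^ n)
      = (if n = l+1 then coeff m (Φ^(l+1)) else 0)
        + (if n = 2*l+1 then δ * coeff m (Φ^(2*l+1)) else 0) := by
    intro n
    rw [Htilde, map_add, coeff_C_mul, coeff_X_pow, coeff_X_pow]
    split_ifs with h1 h2 h2 <;> first | omega | (subst_vars; ring) | ring
  rw [Finset.sum_congr rfl fun n _ => hcoeff n, Finset.sum_add_distrib,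
    Finset.sum_ite_eq' _ (l+1) (fun _ => coeff m (Φ^(l+1))),
    Finset.sum_ite_eq' _ (2*l+1) (fun _ => δ * coeff m (Φ^(2*l+1)))]
  rw [map_add, coeff_C_mul]
  simp only [Finset.mem_range]
  split_ifs with h1 h2 h2
  · rfl
  · rw [coeff_pow_eq_zero hΦ (show m < 2*l+1 by omega)]; ring
  · omega
  · rw [coeff_pow_eq_zero hΦ (show m < l+1 by omega),
      coeff_pow_eq_zero hΦ (show m < 2*l+1 by omega)]; ring

lemma coeff_Ee_low {l : ℕ} (hl : 1 ≤ l) (δ : k) {Φ : PowerSeries k}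
    (hΦ : constantCoeff Φ = 0) {m : ℕ} (hm : m ≤ l) :
    coeff m (Ee l δ Φ) = 0 := by
  rw [Ee, map_sub, map_add, coeff_C_mul, coeff_mul_Htilde,
    coeff_pow_eq_zero hΦ (show m < l+1 by omega),
    coeff_pow_eq_zero hΦ (show m < 2*l+1 by omega),
    if_neg (by omega), if_neg (by omega)]
  ring

lemma coeff_Ee_lp1 {l : ℕ} (hl : 1 ≤ l) (δ : k) {Φ : PowerSeries k}
    (hΦ : constantCoeff Φ = 0) :
    coeff (l+1) (Ee l δ Φ) = (coeff 1 Φ)^(l+1) - coeff 1 Φ := by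
  rw [Ee, map_sub, map_add, coeff_C_mul, coeff_mul_Htilde,
    coeff_pow_self hΦ,
    coeff_pow_eq_zero hΦ (show l+1 < 2*l+1 by omega),
    if_pos (le_refl _), if_neg (by omega)]
  simp [coeff_derivativeFun', constantCoeff_derivativeFun']

lemma key_diff {l : ℕ} (hl : 1 ≤ l) (δ : k) {Φ Ψ : PowerSeries k}
    (hΦ : constantCoeff Φ = 0) (hΨ : constantCoeff Ψ = 0) {j : ℕ} (hj : 2 ≤ j)
    (hagree : ∀ i, i < j → coeff i Φ = coeff i Ψ) :
    coeff (j + l) (Ee l δ Φ) = coeff (j + l) (Ee l δ Ψ)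
      + ((l+1 : k) * (coeff 1 Φ)^l - (j : k)) * (coeff j Φ - coeff j Ψ) := by
  have hD : (X : PowerSeries k)^j ∣ (Φ - Ψ) := by
    rw [X_pow_dvd_iff]
    intro m hm
    rw [map_sub, hagree m hm, sub_self]
  have hXΦ : (X : PowerSeries k) ∣ Φ := X_dvd_iff.2 hΦ
  have hXΨ : (X : PowerSeries k) ∣ Ψ := X_dvd_iff.2 hΨ
  have hc1 : coeff 1 Ψ = coeff 1 Φ := (hagree 1 (by omega)).symm
  -- geometric sum factorization
  have hS : ∀ n : ℕ, (X : PowerSeries k)^(n-1) ∣ ∑ i ∈ Finset.range n, Φ ^ i * Ψ ^ (n - 1 - i) := by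
    intro n
    apply Finset.dvd_sum
    intro i hi
    rw [Finset.mem_range] at hi
    have hd := mul_dvd_mul (pow_dvd_pow_of_dvd hXΦ i) (pow_dvd_pow_of_dvd hXΨ (n-1-i))
    rw [← pow_add] at hd
    exact (pow_dvd_pow (X : PowerSeries k) (le_of_eq (by omega : n - 1 = i + (n-1-i)))).trans hd
  have hfact : ∀ n : ℕ, Φ ^ n - Ψ ^ n
      = (∑ i ∈ Finset.range n, Φ ^ i * Ψ ^ (n - 1 - i)) * (Φ - Ψ) :=
    fun n => (geom_sum₂_mul Φ Ψ n).symm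
  -- the (l+1)-power part
  have hA : coeff (j + l) (Φ ^ (l+1) - Ψ ^ (l+1))
      = (l+1 : k) * (coeff 1 Φ)^l * (coeff j Φ - coeff j Ψ) := by
    rw [hfact (l+1), add_comm j l, coeff_mul_of_dvd (by simpa using hS (l+1)) hD, map_sub]
    congr 1
    rw [map_sum]
    have : ∀ i ∈ Finset.range (l+1),
        coeff l (Φ ^ i * Ψ ^ (l + 1 - 1 - i)) = (coeff 1 Φ)^l := by
      intro i hi
      rw [Finset.mem_range] at hi
      have h := coeff_pow_mul_pow hΦ hΨ i (l - i)
      rw [hc1, ← pow_add, show i + (l - i) = l by omega] at h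
      rw [show l + 1 - 1 - i = l - i by omega, h]
    rw [Finset.sum_congr rfl this, Finset.sum_const, Finset.card_range, nsmul_eq_mul]
    push_cast
    ring
  -- the (2l+1)-power part
  have hB : coeff (j + l) (Φ ^ (2*l+1) - Ψ ^ (2*l+1)) = 0 := by
    have : (X : PowerSeries k)^(j + l + 1) ∣ (Φ ^ (2*l+1) - Ψ ^ (2*l+1)) := by
      rw [hfact (2*l+1)]
      have h2 : (X : PowerSeries k)^(2*l) ∣ _ := hS (2*l+1)
      calc (X : PowerSeries k)^(j+l+1) ∣ (X : PowerSeries k)^(2*l) * (X:PowerSeries k)^j := by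
            rw [← pow_add]; exact pow_dvd_pow _ (by omega)
        _ ∣ _ := mul_dvd_mul (by simpa using hS (2*l+1)) hD
    exact X_pow_dvd_iff.1 this _ (by omega)
  -- derivative part
  have hDder : ∀ m, m < j - 1 → coeff m (derivativeFun (Φ - Ψ)) = 0 := by
    intro m hm
    rw [coeff_derivativeFun', X_pow_dvd_iff.1 hD (m+1) (by omega), zero_mul]
  have hC : coeff (j + l) (derivativeFun (Φ - Ψ) * Htilde l δ)
      = (j : k) * (coeff j Φ - coeff j Ψ) := by
    rw [coeff_mul_Htilde, if_pos (by omega : l+1 ≤ j+l)]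
    have h1 : j + l - (l+1) = j - 1 := by omega
    have h2 : coeff (j-1) (derivativeFun (Φ - Ψ)) = (coeff j Φ - coeff j Ψ) * j := by
      rw [coeff_derivativeFun', show j - 1 + 1 = j by omega, map_sub]
      push_cast [show ((j - 1 : ℕ) : k) + 1 = (j : k) by
        have : (1:ℕ) ≤ j := by omega
        push_cast [Nat.cast_sub this]
        ring]
      ring
    rw [h1, h2]
    split_ifs with h3
    · rw [show j + l - (2*l+1) = j - (l+1) by omega]
      rw [hDder (j - (l+1)) (by omega), mul_zero, add_zero]
      ring
    · ring
  have hsplit : Ee l δ Φ - Ee l δ Ψ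
      = (Φ ^ (l+1) - Ψ ^ (l+1)) + C δ * (Φ ^ (2*l+1) - Ψ ^ (2*l+1))
        - derivativeFun (Φ - Ψ) * Htilde l δ := by
    rw [Ee, Ee, derivativeFun_sub]
    ring
  have := congrArg (coeff (j+l)) hsplit
  rw [map_sub, map_sub, map_add, coeff_C_mul, hA, hB, hC] at this
  have h0 : coeff (j+l) (Ee l δ Φ) - coeff (j+l) (Ee l δ Ψ)
      = (l+1 : k) * (coeff 1 Φ)^l * (coeff j Φ - coeff j Ψ)
        - (j : k) * (coeff j Φ - coeff j Ψ) := by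
    rw [this]; ring
  linear_combination h0

lemma Ee_linear (l : ℕ) (δ : k) {c₁ : k} (h : c₁ ^ l = 1) :
    Ee l δ (C c₁ * X) = 0 := by
  have h1 : c₁ ^ (l+1) = c₁ := by rw [pow_succ, h, one_mul]
  have h2 : c₁ ^ (2*l+1) = c₁ := by
    rw [show 2*l+1 = l + (l+1) by ring, pow_add, h, one_mul, h1]
  have hd : derivativeFun (C c₁ * X : PowerSeries k) = C c₁ := by
    ext n
    rw [coeff_derivativeFun', coeff_C_mul, coeff_X, coeff_C]
    rcases n with _ | n <;> simp
  rw [Ee, hd, mul_pow, mul_pow, ← map_pow, ← map_pow, h1, h2, Htilde]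
  ring

noncomputable def solC (l s : ℕ) (δ c₁ clp : k) (ctail : ℕ → k) : ℕ → k
  | j =>
    if j = 0 then 0
    else if j = 1 then c₁
    else if j = l + 1 then clp
    else if s < j then 0
    else if s - l + 1 ≤ j then ctail j
    else -(coeff (j + l) (Ee l δ
        (mk fun i => if h : i < j then solC l s δ c₁ clp ctail i else 0)))
          / ((l + 1 : k) - (j : k))

noncomputable def Tser (l s : ℕ) (δ c₁ clp : k) (ctail : ℕ → k) (j : ℕ) : PowerSeries k :=
  mk fun i => if i < j then solC l s δ c₁ clp ctail i else 0

section
variable (l s : ℕ) (δ c₁ clp : k) (ctail : ℕ → k)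

lemma solC_zero : solC l s δ c₁ clp ctail 0 = 0 := by rw [solC]; norm_num

lemma solC_one : solC l s δ c₁ clp ctail 1 = c₁ := by rw [solC]; norm_num

lemma solC_lp1 (hl : 1 ≤ l) : solC l s δ c₁ clp ctail (l+1) = clp := by
  rw [solC]; simp only [if_neg (by omega : l+1 ≠ 0), if_neg (by omega : l+1 ≠ 1), if_pos rfl, if_true]

lemma solC_tail (hl : 1 ≤ l) (hs : 2*l+1 ≤ s) (j : ℕ) (h1 : s - l + 1 ≤ j) (h2 : j ≤ s) :
    solC l s δ c₁ clp ctail j = ctail j := by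
  rw [solC]
  rw [if_neg (by omega), if_neg (by omega), if_neg (by omega), if_neg (by omega), if_pos h1]

lemma solC_high (hl : 1 ≤ l) (hs : 2*l+1 ≤ s) (j : ℕ) (h1 : s < j) :
    solC l s δ c₁ clp ctail j = 0 := by
  rw [solC]
  rw [if_neg (by omega), if_neg (by omega), if_neg (by omega), if_pos h1]

lemma solC_mid (hl : 1 ≤ l) (hs : 2*l+1 ≤ s) (j : ℕ) (h1 : 2 ≤ j) (h2 : j ≤ s - l)
    (h3 : j ≠ l + 1) :
    solC l s δ c₁ clp ctail j
      = -(coeff (j + l) (Ee l δ (Tser l s δ c₁ clp ctail j))) / ((l + 1 : k) - (j : k)) := by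
  rw [solC]
  rw [if_neg (by omega), if_neg (by omega), if_neg h3, if_neg (by omega), if_neg (by omega)]
  rfl

lemma coeff_Tser (j i : ℕ) :
    coeff i (Tser l s δ c₁ clp ctail j)
      = if i < j then solC l s δ c₁ clp ctail i else 0 := by
  rw [Tser, coeff_mk]

lemma constantCoeff_Tser (j : ℕ) : constantCoeff (Tser l s δ c₁ clp ctail j) = 0 := by
  rw [← coeff_zero_eq_constantCoeff, coeff_Tser]
  split_ifs <;> simp [solC_zero]

end

section
variable {l s : ℕ} {δ c₁ clp : k} {ctail : ℕ → k}

/-- If all `solC i = 0` for `2 ≤ i < j`, then the truncation is `c₁ X`. -/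
lemma Tser_eq_linear (hj : 2 ≤ j) (h0 : ∀ i, 2 ≤ i → i < j → solC l s δ c₁ clp ctail i = 0) :
    Tser l s δ c₁ clp ctail j = C c₁ * X := by
  ext a
  rw [coeff_Tser, coeff_C_mul, coeff_X]
  rcases a with _ | a
  · rw [if_pos (by omega), solC_zero]; norm_num
  rcases a with _ | a
  · rw [if_pos (by omega), solC_one]; norm_num
  · rw [if_neg (show ¬(a+1+1 = 1) by omega), mul_zero]
    split_ifs with hh
    · exact h0 _ (by omega) hh
    · rfl

lemma solC_low (hl : 1 ≤ l) (hs : 2*l+1 ≤ s) (hc : c₁ ^ l = 1) :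
    ∀ j, 2 ≤ j → j ≤ l → solC l s δ c₁ clp ctail j = 0 := by
  intro j
  induction j using Nat.strong_induction_on with
  | _ j ih =>
    intro h2 hjl
    rw [solC_mid l s δ c₁ clp ctail hl hs j h2 (by omega) (by omega),
      Tser_eq_linear h2 (fun i hi1 hi2 => ih i hi2 hi1 (by omega)),
      Ee_linear l δ hc, map_zero, neg_zero, zero_div]

lemma Tser_lp1_eq_linear (hl : 1 ≤ l) (hs : 2*l+1 ≤ s) (hc : c₁ ^ l = 1) :
    Tser l s δ c₁ clp ctail (l+1) = C c₁ * X :=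
  Tser_eq_linear (by omega) (fun i hi1 hi2 => solC_low hl hs hc i hi1 (by omega))

/-- The key recursion step applied to `Φ = mk solC`. -/
lemma key_solC (hl : 1 ≤ l) (hj : 2 ≤ j) :
    coeff (j + l) (Ee l δ (mk (solC l s δ c₁ clp ctail)))
      = coeff (j + l) (Ee l δ (Tser l s δ c₁ clp ctail j))
        + ((l+1 : k) * c₁ ^ l - (j : k)) * solC l s δ c₁ clp ctail j := by
  have h := key_diff hl δ (Φ := mk (solC l s δ c₁ clp ctail))
    (Ψ := Tser l s δ c₁ clp ctail j)
    (by rw [← coeff_zero_eq_constantCoeff, coeff_mk, solC_zero])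
    (constantCoeff_Tser l s δ c₁ clp ctail j) hj
    (fun i hi => by rw [coeff_mk, coeff_Tser, if_pos hi])
  rw [h, coeff_mk, coeff_mk, coeff_Tser, if_neg (by omega), sub_zero, solC_one]

lemma coeff_Ee_solC_eq_zero (hl : 1 ≤ l) (hs : 2*l+1 ≤ s) (hc : c₁ ^ l = 1)
    {m : ℕ} (hm : m ≤ s) :
    coeff m (Ee l δ (mk (solC l s δ c₁ clp ctail))) = 0 := by
  have hcc : constantCoeff (mk (solC l s δ c₁ clp ctail)) = 0 := by
    rw [← coeff_zero_eq_constantCoeff, coeff_mk, solC_zero]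
  have hc1 : coeff 1 (mk (solC l s δ c₁ clp ctail)) = c₁ := by
    rw [coeff_mk, solC_one]
  rcases le_or_gt m l with h | h
  · exact coeff_Ee_low hl δ hcc h
  rcases eq_or_lt_of_le (Nat.succ_le_of_lt h) with h' | h'
  · rw [show m = l + 1 by omega, coeff_Ee_lp1 hl δ hcc, hc1, pow_succ, hc, one_mul, sub_self]
  -- m ≥ l + 2 : write m = j + l with j ≥ 2
  obtain ⟨j, rfl⟩ : ∃ j, m = j + l := ⟨m - l, by omega⟩
  have hj2 : 2 ≤ j := by omega
  rw [key_solC hl hj2]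
  by_cases hjl : j = l + 1
  · subst hjl
    rw [Tser_lp1_eq_linear hl hs hc, Ee_linear l δ hc, map_zero, hc, mul_one, zero_add]
    push_cast
    ring
  · rw [solC_mid l s δ c₁ clp ctail hl hs j hj2 (by omega) hjl, hc, mul_one]
    have hden : (l + 1 : k) - (j : k) ≠ 0 := by
      intro h0
      apply hjl
      have : ((l + 1 : ℕ) : k) = (j : k) := by push_cast; linear_combination h0
      exact (Nat.cast_inj.1 this).symm
    field_simp
    ring

end

/-- For `H̃ = X^(l+1) + δX^(2l+1)` and `s ≥ 2l+1`: given `c₁` with `c₁^l = 1`,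
a value for the coefficient of `X^(l+1)`, and values for the coefficients of
`X^(s-l+1), …, X^s`, the remaining coefficients `c_j` (`2 ≤ j ≤ s`) are uniquely
determined so that `Φ = c₁X + Σ_{j=2}^s c_j X^j` solves the Aczél–Jabotinsky
equation mod `X^(s+1)`. Moreover every order-1 solution has `(coeff 1 Φ)^l = 1`. -/
theorem aczel_jabotinsky_truncated_normal_solutions (l s : ℕ)
    (hl : 1 ≤ l) (hs : 2 * l + 1 ≤ s) (δ : k) :
    (∀ c₁ : k, c₁ ^ l = 1 → ∀ clp : k, ∀ ctail : ℕ → k,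
      ∃! Φ : PowerSeries k,
        constantCoeff Φ = 0 ∧ coeff 1 Φ = c₁ ∧
        coeff (l + 1) Φ = clp ∧
        (∀ j, s - l + 1 ≤ j → j ≤ s → coeff j Φ = ctail j) ∧
        (∀ j, s < j → coeff j Φ = 0) ∧
        (X : PowerSeries k) ^ (s + 1) ∣
          comp (Htilde l δ) Φ - derivativeFun Φ * Htilde l δ) ∧
    (∀ Φ : PowerSeries k,
      constantCoeff Φ = 0 → coeff 1 Φ ≠ 0 →
      (X : PowerSeries k) ^ (s + 1) ∣
        comp (Htilde l δ) Φ - derivativeFun Φ * Htilde l δ →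
      (coeff 1 Φ) ^ l = 1) := by
  have hEe : ∀ Φ : PowerSeries k, constantCoeff Φ = 0 →
      comp (Htilde l δ) Φ - derivativeFun Φ * Htilde l δ = Ee l δ Φ := by
    intro Φ hΦ
    rw [comp_Htilde hl δ hΦ, Ee]
  constructor
  · intro c₁ hc clp ctail
    refine ⟨mk (solC l s δ c₁ clp ctail), ⟨?_, ?_, ?_, ?_, ?_, ?_⟩, ?_⟩
    · rw [← coeff_zero_eq_constantCoeff, coeff_mk, solC_zero]
    · rw [coeff_mk, solC_one]
    · rw [coeff_mk, solC_lp1 l s δ c₁ clp ctail hl]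
    · intro j h1 h2
      rw [coeff_mk, solC_tail l s δ c₁ clp ctail hl hs j h1 h2]
    · intro j h1
      rw [coeff_mk, solC_high l s δ c₁ clp ctail hl hs j h1]
    · rw [hEe _ (by rw [← coeff_zero_eq_constantCoeff, coeff_mk, solC_zero]),
        X_pow_dvd_iff]
      intro m hm
      exact coeff_Ee_solC_eq_zero hl hs hc (by omega)
    · -- uniqueness
      rintro Ψ ⟨h0, h1, h2, h3, h4, h5⟩
      rw [hEe _ h0, X_pow_dvd_iff] at h5
      have hco : ∀ j, coeff j Ψ = solC l s δ c₁ clp ctail j := by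
        intro j
        induction j using Nat.strong_induction_on with
        | _ j ih =>
          rcases Nat.eq_or_lt_of_le (Nat.zero_le j) with hj0 | hj0
          · rw [← hj0, solC_zero, coeff_zero_eq_constantCoeff, h0]
          rcases Nat.lt_or_ge j 2 with hj1 | hj1
          · rw [show j = 1 by omega, solC_one, h1]
          by_cases hjl : j = l + 1
          · rw [hjl, solC_lp1 l s δ c₁ clp ctail hl, h2]
          rcases Nat.lt_or_ge s j with hjs | hjs
          · rw [solC_high l s δ c₁ clp ctail hl hs j hjs, h4 j hjs]
          rcases Nat.lt_or_ge (s - l) j with hjt | hjt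
          · rw [solC_tail l s δ c₁ clp ctail hl hs j (by omega) hjs,
              h3 j (by omega) hjs]
          -- middle case
          have hkey := key_diff hl δ (Φ := Ψ) (Ψ := Tser l s δ c₁ clp ctail j)
            h0 (constantCoeff_Tser l s δ c₁ clp ctail j) hj1
            (fun i hi => by rw [coeff_Tser, if_pos hi, ih i hi])
          rw [h5 (j + l) (by omega), coeff_Tser, if_neg (by omega), sub_zero, h1, hc,
            mul_one] at hkey
          have hden : (l + 1 : k) - (j : k) ≠ 0 := by
            intro hd0
            apply hjl
            have : ((l + 1 : ℕ) : k) = (j : k) := by push_cast; linear_combination hd0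
            exact (Nat.cast_inj.1 this).symm
          rw [solC_mid l s δ c₁ clp ctail hl hs j hj1 hjt hjl]
          field_simp
          linear_combination -hkey
      ext n
      rw [hco n, coeff_mk]
  · intro Φ h0 h1 h5
    rw [hEe _ h0, X_pow_dvd_iff] at h5
    have := h5 (l + 1) (by omega)
    rw [coeff_Ee_lp1 hl δ h0] at this
    have h6 : coeff 1 Φ * ((coeff 1 Φ) ^ l - 1) = 0 := by
      rw [mul_sub, mul_one, ← pow_succ']
      linear_combination this
    rcases mul_eq_zero.1 h6 with h7 | h7
    · exact absurd h7 h1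
    · linear_combination h7
end

section
/- Let l ≥ 1 be an integer and let H ∈ k⟦X⟧ have coefficient 0 of X^j for all j ≤ l and coefficient 1 of X^{l+1} (i.e. H = X^{l+1} + Σ_{j≥l+2} h_j X^j). If Φ ∈ k⟦X⟧ has order 1 and satisfies H∘Φ = Φ′·H, then the coefficient c₁ of X in Φ satisfies c₁^l = 1. -/
open PowerSeries

variable {k : Type*} [Field k] [CharZero k]

/-- For a generator `H = X^(l+1) + Σ_{j ≥ l+2} h_j X^j`, the linear coefficient
of every order-1 solution of the Aczél–Jabotinsky equation is an `l`-th root of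
unity. -/
theorem aczel_jabotinsky_linear_coeff_root_of_unity (l : ℕ) (hl : 1 ≤ l)
    (H : PowerSeries k)
    (hHlow : ∀ j, j ≤ l → coeff j H = 0)
    (hHlead : coeff (l + 1) H = 1)
    (Φ : PowerSeries k)
    (hΦ0 : constantCoeff Φ = 0) (hΦ1 : coeff 1 Φ ≠ 0)
    (hAJ : comp H Φ = derivativeFun Φ * H) :
    (coeff 1 Φ) ^ l = 1 := by
  obtain ⟨ψ, hψ⟩ := X_dvd_iff.mpr hΦ0
  have hc1 : coeff 1 Φ = constantCoeff ψ := by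
    rw [hψ]
    simpa using coeff_X_pow_mul ψ 1 0
  -- coefficient l+1 of Φ^(l+1)
  have hpow : coeff (l + 1) (Φ ^ (l + 1)) = (coeff 1 Φ) ^ (l + 1) := by
    rw [hψ, mul_pow]
    have := coeff_X_pow_mul (ψ ^ (l + 1)) (l + 1) 0
    simpa [hc1, coeff_zero_eq_constantCoeff, map_pow] using this
  -- coefficient l+1 of comp H Φ
  have hL : coeff (l + 1) (comp H Φ) = (coeff 1 Φ) ^ (l + 1) := by
    rw [comp, coeff_mk]
    rw [Finset.sum_eq_single (l + 1)]
    · rw [hHlead, one_mul, hpow]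
    · intro n hn hne
      simp only [Finset.mem_range] at hn
      rw [hHlow n (by omega), zero_mul]
    · intro h; simp at h
  -- coefficient l+1 of RHS
  have hR : coeff (l + 1) (derivativeFun Φ * H) = coeff 1 Φ := by
    rw [coeff_mul, Finset.sum_eq_single (0, l + 1)]
    · simp [hHlead]
      rw [← coeff_zero_eq_constantCoeff_apply]
      show coeff 0 (derivative k Φ) = _
      rw [coeff_derivative]
      simp
    · rintro ⟨i, j⟩ hij hne
      simp only [Finset.HasAntidiagonal.mem_antidiagonal] at hij
      have : j ≤ l := by
        rcases Nat.lt_or_ge j (l + 1) with h | h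
        · omega
        · exfalso; apply hne; have : j = l + 1 := by omega
          simp [Prod.ext_iff, this]; omega
      rw [hHlow j this, mul_zero]
    · intro h; simp at h
  have key : (coeff 1 Φ) ^ (l + 1) = coeff 1 Φ := by
    rw [← hL, hAJ, hR]
  have : (coeff 1 Φ) ^ l * coeff 1 Φ = 1 * coeff 1 Φ := by
    rw [← pow_succ, key, one_mul]
  exact mul_right_cancel₀ hΦ1 this
end

section
/- Let l ≥ 1 be an integer, δ ∈ k, and H̃ = X^{l+1} + δ·X^{2l+1}. Suppose Φ ∈ k⟦X⟧ has constant coefficient 0 and coefficient of X equal to 1, satisfies H̃∘Φ = Φ′·H̃, and suppose there is an integer m ≥ 2 such that the coefficient of X^m in Φ is nonzero while the coefficient of X^j in Φ is zero for all 2 ≤ j < m. Then m = l+1. -/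
open PowerSeries

variable {k : Type*} [Field k] [CharZero k]

private lemma aux_coeff_pow (m : ℕ) (hm : 2 ≤ m) (E : PowerSeries k)
    (hE : ∀ j < m, coeff j E = 0) (n N : ℕ) (hN : N < n + 2 * (m - 1)) :
    coeff N ((X + E) ^ n) =
      (if N = n then 1 else 0) + (n : k) * coeff (N - (n - 1)) E := by
  have hE0 : coeff 0 E = 0 := hE 0 (by omega)
  have hdvd : (X : PowerSeries k) ^ m ∣ E := PowerSeries.X_pow_dvd_iff.mpr hE
  rcases Nat.eq_zero_or_pos n with rfl | hn
  · simp [PowerSeries.coeff_one]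
  rw [add_pow, map_sum]
  have key : ∀ j ∈ Finset.range (n + 1), j ≠ n → j ≠ n - 1 →
      coeff N (X ^ j * E ^ (n - j) * ((n.choose j : ℕ) : PowerSeries k)) = 0 := by
    intro j hj hjn hjn1
    have hj2 : n - j ≥ 2 := by simp [Finset.mem_range] at hj; omega
    rw [← map_natCast C (n.choose j), PowerSeries.coeff_mul_C,
      PowerSeries.coeff_X_pow_mul']
    split_ifs with h
    · have hz : coeff (N - j) (E ^ (n - j)) = 0 := by
        have hdvd2 : (X : PowerSeries k) ^ (m * (n - j)) ∣ E ^ (n - j) := by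
          rw [pow_mul]; exact pow_dvd_pow_of_dvd hdvd (n - j)
        refine PowerSeries.X_pow_dvd_iff.mp hdvd2 (N - j) ?_
        obtain ⟨i, hi⟩ : ∃ i, n - j = i + 2 := ⟨n - j - 2, by omega⟩
        have hle : (i + 2) + 2 * (m - 1) ≤ m * (i + 2) := by
          obtain ⟨m', rfl⟩ : ∃ m', m = m' + 2 := ⟨m - 2, by omega⟩
          have hmm : m' + 2 - 1 = m' + 1 := by omega
          rw [hmm]; nlinarith
        have hlt : N - j < (i + 2) + 2 * (m - 1) := by omega
        rw [hi]
        exact lt_of_lt_of_le hlt hle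
      rw [hz, zero_mul]
    · rw [zero_mul]
  have hsum : ∑ j ∈ Finset.range (n + 1),
      coeff N (X ^ j * E ^ (n - j) * ((n.choose j : ℕ) : PowerSeries k)) =
      ∑ j ∈ ({n - 1, n} : Finset ℕ),
      coeff N (X ^ j * E ^ (n - j) * ((n.choose j : ℕ) : PowerSeries k)) := by
    refine (Finset.sum_subset ?_ ?_).symm
    · intro x hx; simp at hx; simp [Finset.mem_range]; omega
    · intro x hx hx2
      simp only [Finset.mem_insert, Finset.mem_singleton, not_or] at hx2
      exact key x hx hx2.2 hx2.1
  rw [hsum, Finset.sum_pair (by omega : n - 1 ≠ n)]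
  have h1 : coeff N (X ^ (n - 1) * E ^ (n - (n - 1)) * ((n.choose (n - 1) : ℕ) : PowerSeries k))
      = (n : k) * coeff (N - (n - 1)) E := by
    have : n - (n - 1) = 1 := by omega
    rw [this, Nat.choose_symm (by omega : 1 ≤ n), Nat.choose_one_right, pow_one,
      ← map_natCast C n, PowerSeries.coeff_mul_C, PowerSeries.coeff_X_pow_mul']
    split_ifs with h
    · ring
    · have : N - (n - 1) = 0 := by omega
      rw [this, hE0, zero_mul, mul_zero]
  have h2 : coeff N (X ^ n * E ^ (n - n) * ((n.choose n : ℕ) : PowerSeries k))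
      = if N = n then 1 else 0 := by
    simp [PowerSeries.coeff_X_pow]
  rw [h1, h2, add_comm]

/-- If `Φ = X + c_m X^m + …` (with `c_m ≠ 0`) solves the Aczél–Jabotinsky
equation with generator `H̃ = X^(l+1) + δX^(2l+1)`, then `m = l + 1`. -/
theorem aczel_jabotinsky_first_nonzero_coeff (l : ℕ) (hl : 1 ≤ l) (δ : k)
    (Φ : PowerSeries k)
    (hΦ0 : constantCoeff Φ = 0) (hΦ1 : coeff 1 Φ = 1)
    (hAJ : comp (Htilde l δ) Φ = derivativeFun Φ * Htilde l δ)
    (m : ℕ) (hm : 2 ≤ m)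
    (hmc : coeff m Φ ≠ 0)
    (hbelow : ∀ j, 2 ≤ j → j < m → coeff j Φ = 0) :
    m = l + 1 := by
  by_contra hne
  set c := coeff m Φ with hc
  set E := Φ - X with hEdef
  have hΦeq : Φ = X + E := by rw [hEdef]; ring
  have hE : ∀ j < m, coeff j E = 0 := by
    intro j hj
    rw [hEdef, map_sub, PowerSeries.coeff_X]
    rcases Nat.lt_or_ge j 2 with h2 | h2
    · interval_cases j
      · simp [← PowerSeries.coeff_zero_eq_constantCoeff] at hΦ0 ⊢
        simpa using hΦ0
      · simp [hΦ1]
    · rw [hbelow j h2 hj, if_neg (by omega)]; ring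
  have hEm : coeff m E = c := by
    rw [hEdef, map_sub, PowerSeries.coeff_X, if_neg (by omega)]
    simp [hc]
  have hH : ∀ n, coeff n (Htilde l δ) =
      (if n = l + 1 then 1 else 0) + δ * (if n = 2 * l + 1 then 1 else 0) := by
    intro n
    simp [Htilde, PowerSeries.coeff_X_pow, PowerSeries.coeff_C_mul]
  -- key coefficient computations
  have h1 : coeff (m + l) (Φ ^ (l + 1)) = ((l : k) + 1) * c := by
    rw [hΦeq, aux_coeff_pow m hm E hE (l + 1) (m + l) (by omega)]
    rw [if_neg (by omega)]
    have : m + l - (l + 1 - 1) = m := by omega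
    rw [this, hEm]
    push_cast
    ring
  have h2 : coeff (m + l) (Φ ^ (2 * l + 1)) = 0 := by
    rw [hΦeq, aux_coeff_pow m hm E hE (2 * l + 1) (m + l) (by omega)]
    rw [if_neg (by omega)]
    rw [hE (m + l - (2 * l + 1 - 1)) (by omega)]
    ring
  have hL : coeff (m + l) (comp (Htilde l δ) Φ) = ((l : k) + 1) * c := by
    rw [comp, PowerSeries.coeff_mk]
    rw [Finset.sum_eq_single (l + 1)]
    · rw [hH, if_pos rfl, if_neg (by omega), h1]; ring
    · intro n hn hne'
      rw [hH, if_neg hne']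
      by_cases h2l : n = 2 * l + 1
      · subst h2l; rw [h2]; ring
      · rw [if_neg h2l]; ring
    · intro h
      exact absurd (Finset.mem_range.mpr (by omega)) h
  have hR : coeff (m + l) (derivativeFun Φ * Htilde l δ) = (m : k) * c := by
    have hexp : derivativeFun Φ * Htilde l δ =
        X ^ (l + 1) * derivativeFun Φ + C δ * (X ^ (2 * l + 1) * derivativeFun Φ) := by
      rw [Htilde]; ring
    rw [hexp, map_add, PowerSeries.coeff_C_mul,
      PowerSeries.coeff_X_pow_mul', PowerSeries.coeff_X_pow_mul']
    rw [if_pos (by omega : l + 1 ≤ m + l)]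
    have e1 : m + l - (l + 1) = m - 1 := by omega
    rw [e1, (by intro n; exact PowerSeries.coeff_derivative Φ n : ∀ n : ℕ, coeff n (derivativeFun Φ) = coeff (n + 1) Φ * (n + 1))]
    have e2 : m - 1 + 1 = m := by omega
    rw [e2, ← hc]
    have hz : (if 2 * l + 1 ≤ m + l then coeff (m + l - (2 * l + 1)) (derivativeFun Φ) else 0)
        = 0 := by
      split_ifs with h
      · rw [(by intro n; exact PowerSeries.coeff_derivative Φ n : ∀ n : ℕ, coeff n (derivativeFun Φ) = coeff (n + 1) Φ * (n + 1))]
        have : m + l - (2 * l + 1) + 1 = m - l := by omega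
        rw [this, hbelow (m - l) (by omega) (by omega)]
        ring
      · rfl
    rw [hz, mul_zero, add_zero]
    push_cast [Nat.cast_sub (show 1 ≤ m by omega)]
    ring
  rw [hAJ, hR] at hL
  have hcancel : (m : k) = (l : k) + 1 := mul_right_cancel₀ hmc hL
  exact hne (by exact_mod_cast hcancel)
end
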